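/- Let d ≥ 1 and γ ≥ 2 be integers, fix indices 1 ≤ a < b ≤ γ, and let H' be the rewired graph obtained from the layered graph H_{γ,d} by deleting the two edges {u¹_a, u¹_b} and {u^{2d+1}_a, u^{2d+1}_b} and adding the two edges {u¹_a, u^{2d+1}_b} and {u¹_b, u^{2d+1}_a}. Let T be the spanning subgraph of H_{γ,d} whose edges are {u⁰, u¹_j} for 1 ≤ j ≤ γ, {u¹_1, u²}, {uⁱ, u^{i+1}} for 2 ≤ i ≤ 2d−1, and {u^{2d}, u^{2d+1}_j} for 1 ≤ j ≤ γ. Then: (i) T is still a spanning tree of H'; (ii) dist_{H'}(u⁰, u^{2d+1}_a) = dist_{H'}(u⁰, u^{2d+1}_b) = 2; and (iii) dist_T(u⁰, u^{2d+1}_a) = 2d + 1 > d · dist_{H'}(u⁰, u^{2d+1}_a), so T is not a d-approximate BFS tree of H'. -/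

import Mathlib

/-- The vertex type of the layered graph `H_{γ,d}`: one root vertex (level 0), `γ` vertices at
level 1, a single vertex at each level `2, …, 2d` (that is `2d - 1` vertices), and `γ` vertices
at level `2d + 1`. -/
abbrev LayerVert (γ d : ℕ) : Type := Fin 1 ⊕ Fin γ ⊕ Fin (2 * d - 1) ⊕ Fin γ

/-- The level of a vertex of `H_{γ,d}`. -/
def level (γ d : ℕ) : LayerVert γ d → ℕ
  | Sum.inl _ => 0
  | Sum.inr (Sum.inl _) => 1
  | Sum.inr (Sum.inr (Sum.inl i)) => i.1 + 2
  | Sum.inr (Sum.inr (Sum.inr _)) => 2 * d + 1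

/-- The index of a vertex inside its level (`0` for the single-vertex levels). -/
def idx (γ d : ℕ) : LayerVert γ d → ℕ
  | Sum.inl _ => 0
  | Sum.inr (Sum.inl j) => j.1
  | Sum.inr (Sum.inr (Sum.inl _)) => 0
  | Sum.inr (Sum.inr (Sum.inr j)) => j.1

/-- The layered graph `H_{γ,d}`: every vertex at level `i` is adjacent to every vertex at level
`i + 1` (for `0 ≤ i ≤ 2d`), and the `γ` vertices at level 1 as well as the `γ` vertices at level
`2d + 1` each form a clique. -/
def layeredGraph (γ d : ℕ) : SimpleGraph (LayerVert γ d) :=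
  SimpleGraph.fromRel (fun u v =>
    level γ d u + 1 = level γ d v ∨
      (level γ d u = level γ d v ∧ (level γ d u = 1 ∨ level γ d u = 2 * d + 1)))

instance (γ d : ℕ) : DecidableRel (layeredGraph γ d).Adj := fun u v =>
  decidable_of_iff _ (SimpleGraph.fromRel_adj _ u v).symm

/-- The root vertex `u⁰` of `H_{γ,d}`. -/
def lvRoot (γ d : ℕ) : LayerVert γ d := Sum.inl 0

/-- The level-1 vertex `u¹_j` of `H_{γ,d}` (0-indexed). -/
def lvOne (γ d : ℕ) (j : Fin γ) : LayerVert γ d := Sum.inr (Sum.inl j)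

/-- The level-`2d+1` vertex `u^{2d+1}_j` of `H_{γ,d}` (0-indexed). -/
def lvTop (γ d : ℕ) (j : Fin γ) : LayerVert γ d := Sum.inr (Sum.inr (Sum.inr j))

/-- The spanning subgraph `T` of `H_{γ,d}` with edges `{u⁰, u¹_j}` for all `j`, `{u¹_1, u²}`,
`{uⁱ, u^{i+1}}` for `2 ≤ i ≤ 2d − 1`, and `{u^{2d}, u^{2d+1}_j}` for all `j`. -/
def layeredTree (γ d : ℕ) : SimpleGraph (LayerVert γ d) :=
  SimpleGraph.fromRel (fun u v =>
    (level γ d u = 0 ∧ level γ d v = 1) ∨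
      (level γ d u = 1 ∧ idx γ d u = 0 ∧ level γ d v = 2) ∨
      (2 ≤ level γ d u ∧ level γ d u ≤ 2 * d - 1 ∧ level γ d v = level γ d u + 1) ∨
      (level γ d u = 2 * d ∧ level γ d v = 2 * d + 1))

/-- The rewired graph `H^{e,ẽ}` obtained from `H_{γ,d}` by deleting the clique edges
`{u¹_a, u¹_b}` and `{u^{2d+1}_a, u^{2d+1}_b}` and adding the crossing edges
`{u¹_a, u^{2d+1}_b}` and `{u¹_b, u^{2d+1}_a}`. -/
def rewiredGraph (γ d : ℕ) (a b : Fin γ) : SimpleGraph (LayerVert γ d) :=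
  ((layeredGraph γ d).deleteEdges
      {s(lvOne γ d a, lvOne γ d b), s(lvTop γ d a, lvTop γ d b)}) ⊔
    SimpleGraph.fromEdgeSet
      {s(lvOne γ d a, lvTop γ d b), s(lvOne γ d b, lvTop γ d a)}

-- aux starts here
def lvMid (γ d : ℕ) (i : Fin (2 * d - 1)) : LayerVert γ d := Sum.inr (Sum.inr (Sum.inl i))

def lvParent (γ d : ℕ) (hγ : 0 < γ) (hd : 1 ≤ d) : LayerVert γ d → LayerVert γ d
  | Sum.inl _ => lvRoot γ d
  | Sum.inr (Sum.inl _) => lvRoot γ d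
  | Sum.inr (Sum.inr (Sum.inl i)) =>
      if _h : i.1 = 0 then lvOne γ d ⟨0, hγ⟩
      else lvMid γ d ⟨i.1 - 1, by have := i.2; omega⟩
  | Sum.inr (Sum.inr (Sum.inr _)) => lvMid γ d ⟨2 * d - 2, by omega⟩

lemma tree_rel_classify {γ d : ℕ} (hγ : 0 < γ) (hd : 1 ≤ d) {u v : LayerVert γ d}
    (h : (level γ d u = 0 ∧ level γ d v = 1) ∨
      (level γ d u = 1 ∧ idx γ d u = 0 ∧ level γ d v = 2) ∨
      (2 ≤ level γ d u ∧ level γ d u ≤ 2 * d - 1 ∧ level γ d v = level γ d u + 1) ∨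
      (level γ d u = 2 * d ∧ level γ d v = 2 * d + 1)) :
    level γ d v = level γ d u + 1 ∧ u = lvParent γ d hγ hd v := by
  rcases u with x | j | i | j <;> rcases v with x' | j' | i' | j' <;>
      simp only [level, idx] at h ⊢
  -- (root, root)
  · omega
  -- (root, one)
  · refine ⟨by first | trivial | omega, congrArg Sum.inl (Subsingleton.elim x 0)⟩
  -- (root, mid)
  · omega
  -- (root, top)
  · omega
  -- (one, root)
  · omega
  -- (one, one)
  · omega
  -- (one, mid)
  · have hj : j.1 = 0 ∧ i'.1 = 0 := by omega
    refine ⟨by first | trivial | omega, ?_⟩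
    simp only [lvParent, hj.2, dif_pos]
    exact congrArg (fun t => Sum.inr (Sum.inl t)) (Fin.ext hj.1)
  -- (one, top)
  · omega
  -- (mid, root)
  · omega
  -- (mid, one)
  · omega
  -- (mid, mid)
  · have hb := i.2; have hb' := i'.2
    have hii : i'.1 = i.1 + 1 := by omega
    refine ⟨by first | trivial | omega, ?_⟩
    simp only [lvParent, hii, dif_neg (Nat.succ_ne_zero _)]
    exact congrArg (fun t => Sum.inr (Sum.inr (Sum.inl t))) (Fin.ext (by simp [hii]))
  -- (mid, top)
  · have hb := i.2
    have hi : i.1 = 2 * d - 2 := by omega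
    refine ⟨by first | trivial | omega, ?_⟩
    simp only [lvParent]
    exact congrArg (fun t => Sum.inr (Sum.inr (Sum.inl t))) (Fin.ext (by simp [hi]))
  -- (top, root)
  · omega
  -- (top, one)
  · omega
  -- (top, mid)
  · have hb' := i'.2; omega
  -- (top, top)
  · omega

lemma tree_adj_classify {γ d : ℕ} (hγ : 0 < γ) (hd : 1 ≤ d) {u v : LayerVert γ d}
    (h : (layeredTree γ d).Adj u v) :
    (level γ d v = level γ d u + 1 ∧ u = lvParent γ d hγ hd v) ∨
      (level γ d u = level γ d v + 1 ∧ v = lvParent γ d hγ hd u) := by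
  rw [layeredTree, SimpleGraph.fromRel_adj] at h
  rcases h.2 with h' | h'
  · exact Or.inl (tree_rel_classify hγ hd h')
  · exact Or.inr (tree_rel_classify hγ hd h')

@[simp] lemma level_lvRoot {γ d : ℕ} : level γ d (lvRoot γ d) = 0 := rfl
@[simp] lemma level_lvOne {γ d : ℕ} (j : Fin γ) : level γ d (lvOne γ d j) = 1 := rfl
@[simp] lemma level_lvMid {γ d : ℕ} (i : Fin (2 * d - 1)) :
    level γ d (lvMid γ d i) = i.1 + 2 := rfl
@[simp] lemma level_lvTop {γ d : ℕ} (j : Fin γ) : level γ d (lvTop γ d j) = 2 * d + 1 := rfl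

lemma level_lvParent_le {γ d : ℕ} (hγ : 0 < γ) (hd : 1 ≤ d) (w : LayerVert γ d) :
    level γ d (lvParent γ d hγ hd w) ≤ level γ d w := by
  rcases w with x | j | i | j
  · exact le_refl _
  · exact Nat.zero_le _
  · by_cases h : i.1 = 0 <;> simp [lvParent, h, level, lvOne, lvMid] <;> omega
  · simp [lvParent, level, lvMid]; omega

lemma level_iterate_lvParent_le {γ d : ℕ} (hγ : 0 < γ) (hd : 1 ≤ d) (k : ℕ)
    (w : LayerVert γ d) :
    level γ d ((lvParent γ d hγ hd)^[k] w) ≤ level γ d w := by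
  induction k with
  | zero => exact le_refl _
  | succ n ih =>
    rw [Function.iterate_succ_apply']
    exact le_trans (level_lvParent_le hγ hd _) ih

/-- `w` is in the subtree below `v`. -/
def InSub (γ d : ℕ) (hγ : 0 < γ) (hd : 1 ≤ d) (v w : LayerVert γ d) : Prop :=
  ∃ k, (lvParent γ d hγ hd)^[k] w = v

lemma inSub_step {γ d : ℕ} (hγ : 0 < γ) (hd : 1 ≤ d) {v x : LayerVert γ d} (hx : x ≠ v) :
    (InSub γ d hγ hd v x ↔ InSub γ d hγ hd v (lvParent γ d hγ hd x)) := by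
  constructor
  · rintro ⟨k, hk⟩
    cases k with
    | zero => exact absurd hk hx
    | succ n => exact ⟨n, by rwa [Function.iterate_succ_apply] at hk⟩
  · rintro ⟨k, hk⟩
    exact ⟨k + 1, by rwa [Function.iterate_succ_apply]⟩

lemma not_inSub_parent {γ d : ℕ} (hγ : 0 < γ) (hd : 1 ≤ d) {u v : LayerVert γ d}
    (hlev : level γ d v = level γ d u + 1) (hu : u = lvParent γ d hγ hd v) :
    ¬ InSub γ d hγ hd v u := by
  rintro ⟨k, hk⟩
  have := level_iterate_lvParent_le hγ hd k u
  rw [hk] at this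
  omega

lemma inSub_adj_iff {γ d : ℕ} (hγ : 0 < γ) (hd : 1 ≤ d) {u v : LayerVert γ d}
    (hu : u = lvParent γ d hγ hd v) {a b : LayerVert γ d}
    (hadj : ((layeredTree γ d) \ SimpleGraph.fromEdgeSet {s(u, v)}).Adj a b) :
    (InSub γ d hγ hd v a ↔ InSub γ d hγ hd v b) := by
  have hT : (layeredTree γ d).Adj a b := hadj.1
  have hne : ¬ (SimpleGraph.fromEdgeSet {s(u, v)}).Adj a b := hadj.2
  have hset : s(a, b) ≠ s(u, v) := by
    intro hs
    exact hne ((SimpleGraph.fromEdgeSet_adj _).mpr ⟨by simp [hs], hT.ne⟩)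
  rcases tree_adj_classify hγ hd hT with ⟨hl, hp⟩ | ⟨hl, hp⟩
  · have hbv : b ≠ v := by
      rintro rfl
      exact hset (by rw [hp, ← hu])
    rw [inSub_step hγ hd hbv, ← hp]
  · have hav : a ≠ v := by
      rintro rfl
      apply hset
      rw [hp, ← hu, Sym2.eq_swap]
    rw [inSub_step hγ hd hav, ← hp]

lemma walk_inSub {γ d : ℕ} (hγ : 0 < γ) (hd : 1 ≤ d) {u v : LayerVert γ d}
    (hu : u = lvParent γ d hγ hd v) :
    ∀ {x y : LayerVert γ d}
      (_ : ((layeredTree γ d) \ SimpleGraph.fromEdgeSet {s(u, v)}).Walk x y),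
      InSub γ d hγ hd v x → InSub γ d hγ hd v y := by
  intro x y w
  induction w with
  | nil => exact id
  | cons h p ih => exact fun hx => ih ((inSub_adj_iff hγ hd hu h).mp hx)

lemma tree_isBridge {γ d : ℕ} (hγ : 0 < γ) (hd : 1 ≤ d) {u v : LayerVert γ d}
    (hT : (layeredTree γ d).Adj u v)
    (hlev : level γ d v = level γ d u + 1) (hu : u = lvParent γ d hγ hd v) :
    (layeredTree γ d).IsBridge s(u, v) := by
  rw [SimpleGraph.isBridge_iff]
  rintro ⟨w⟩
  exact not_inSub_parent hγ hd hlev hu (walk_inSub hγ hd hu w.reverse ⟨0, rfl⟩)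

lemma tree_isAcyclic {γ d : ℕ} (hγ : 0 < γ) (hd : 1 ≤ d) :
    (layeredTree γ d).IsAcyclic := by
  rw [SimpleGraph.isAcyclic_iff_forall_adj_isBridge]
  intro u v hT
  rcases tree_adj_classify hγ hd hT with ⟨hl, hp⟩ | ⟨hl, hp⟩
  · exact tree_isBridge hγ hd hT hl hp
  · rw [Sym2.eq_swap]
    exact tree_isBridge hγ hd hT.symm hl hp

open SimpleGraph in
lemma tAdj_root_one {γ d : ℕ} (j : Fin γ) :
    (layeredTree γ d).Adj (lvRoot γ d) (lvOne γ d j) := by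
  rw [layeredTree, SimpleGraph.fromRel_adj]
  exact ⟨by simp [lvRoot, lvOne], Or.inl (Or.inl ⟨rfl, rfl⟩)⟩

lemma tAdj_one0_mid0 {γ d : ℕ} (hγ : 0 < γ) (h0 : 0 < 2 * d - 1) :
    (layeredTree γ d).Adj (lvOne γ d ⟨0, hγ⟩) (lvMid γ d ⟨0, h0⟩) := by
  rw [layeredTree, SimpleGraph.fromRel_adj]
  exact ⟨by simp [lvMid, lvOne], Or.inl (Or.inr (Or.inl ⟨rfl, rfl, rfl⟩))⟩

lemma tAdj_mid_succ {γ d : ℕ} (i : ℕ) (h : i < 2 * d - 1) (h' : i + 1 < 2 * d - 1) :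
    (layeredTree γ d).Adj (lvMid γ d ⟨i, h⟩) (lvMid γ d ⟨i + 1, h'⟩) := by
  rw [layeredTree, SimpleGraph.fromRel_adj]
  refine ⟨by simp [lvMid], Or.inl (Or.inr (Or.inr (Or.inl ⟨by simp, ?_, ?_⟩)))⟩
  · simp only [level_lvMid]; omega
  · simp only [level_lvMid]

lemma tAdj_mid_top {γ d : ℕ} (hd : 1 ≤ d) (h : 2 * d - 2 < 2 * d - 1) (j : Fin γ) :
    (layeredTree γ d).Adj (lvMid γ d ⟨2 * d - 2, h⟩) (lvTop γ d j) := by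
  rw [layeredTree, SimpleGraph.fromRel_adj]
  refine ⟨by simp [lvMid, lvTop], Or.inl (Or.inr (Or.inr (Or.inr ⟨?_, rfl⟩)))⟩
  simp only [level_lvMid]; omega

lemma exists_walk_mid {γ d : ℕ} (hγ : 0 < γ) (hd : 1 ≤ d) :
    ∀ (i : ℕ) (h : i < 2 * d - 1),
      ∃ w : (layeredTree γ d).Walk (lvRoot γ d) (lvMid γ d ⟨i, h⟩), w.length = i + 2 := by
  intro i
  induction i with
  | zero =>
    intro h
    exact ⟨SimpleGraph.Walk.cons (tAdj_root_one ⟨0, hγ⟩)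
      (SimpleGraph.Walk.cons (tAdj_one0_mid0 hγ h) SimpleGraph.Walk.nil), rfl⟩
  | succ n ih =>
    intro h
    obtain ⟨w, hw⟩ := ih (by omega)
    exact ⟨w.concat (tAdj_mid_succ n (by omega) h), by
      simp [SimpleGraph.Walk.length_concat, hw]⟩

lemma exists_walk_top {γ d : ℕ} (hγ : 0 < γ) (hd : 1 ≤ d) (j : Fin γ) :
    ∃ w : (layeredTree γ d).Walk (lvRoot γ d) (lvTop γ d j), w.length = 2 * d + 1 := by
  have hm : 2 * d - 2 < 2 * d - 1 := by omega
  obtain ⟨w, hw⟩ := exists_walk_mid hγ hd (2 * d - 2) hm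
  exact ⟨w.concat (tAdj_mid_top hd hm j), by
    simp [SimpleGraph.Walk.length_concat, hw]; omega⟩

lemma tree_connected {γ d : ℕ} (hγ : 0 < γ) (hd : 1 ≤ d) :
    (layeredTree γ d).Connected := by
  have hroot : ∀ v : LayerVert γ d, (layeredTree γ d).Reachable (lvRoot γ d) v := by
    intro v
    rcases v with x | j | i | j
    · have : (Sum.inl x : LayerVert γ d) = lvRoot γ d :=
        congrArg Sum.inl (Subsingleton.elim x 0)
      rw [this]
    · exact (tAdj_root_one j).reachable
    · obtain ⟨w, _⟩ := exists_walk_mid (γ := γ) hγ hd i.1 i.2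
      have : lvMid γ d ⟨i.1, i.2⟩ = Sum.inr (Sum.inr (Sum.inl i)) := by
        simp [lvMid]
      rw [← this]
      exact w.reachable
    · obtain ⟨w, _⟩ := exists_walk_top (γ := γ) hγ hd j
      exact w.reachable
  exact SimpleGraph.Connected.mk fun u v => (hroot u).symm.trans (hroot v)

lemma tree_walk_level_le {γ d : ℕ} (hγ : 0 < γ) (hd : 1 ≤ d) :
    ∀ {x y : LayerVert γ d} (w : (layeredTree γ d).Walk x y),
      level γ d y ≤ level γ d x + w.length := by
  intro x y w
  induction w with
  | nil => simp
  | cons h p ih =>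
    rcases tree_adj_classify hγ hd h with ⟨hl, _⟩ | ⟨hl, _⟩ <;>
      simp only [SimpleGraph.Walk.length_cons] <;> omega

lemma tree_dist_top {γ d : ℕ} (hγ : 0 < γ) (hd : 1 ≤ d) (j : Fin γ) :
    (layeredTree γ d).dist (lvRoot γ d) (lvTop γ d j) = 2 * d + 1 := by
  obtain ⟨w, hw⟩ := exists_walk_top (γ := γ) hγ hd j
  have hle : (layeredTree γ d).dist (lvRoot γ d) (lvTop γ d j) ≤ 2 * d + 1 :=
    hw ▸ SimpleGraph.dist_le w
  obtain ⟨p, hp⟩ := w.reachable.exists_walk_length_eq_dist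
  have := tree_walk_level_le hγ hd p
  simp only [level_lvRoot, level_lvTop, hp] at this
  omega

lemma tree_le_rewired {γ d : ℕ} (hγ : 0 < γ) (hd : 1 ≤ d) (a b : Fin γ) :
    layeredTree γ d ≤ rewiredGraph γ d a b := by
  intro u v h
  have hlev : level γ d v = level γ d u + 1 ∨ level γ d u = level γ d v + 1 := by
    rcases tree_adj_classify hγ hd h with ⟨hl, _⟩ | ⟨hl, _⟩
    · exact Or.inl hl
    · exact Or.inr hl
  refine Or.inl (SimpleGraph.deleteEdges_adj.mpr ⟨?_, ?_⟩)
  · rw [layeredGraph, SimpleGraph.fromRel_adj]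
    rcases hlev with hl | hl
    · exact ⟨h.ne, Or.inl (Or.inl hl.symm)⟩
    · exact ⟨h.ne, Or.inr (Or.inl hl.symm)⟩
  · intro hmem
    simp only [Set.mem_insert_iff, Set.mem_singleton_iff, Sym2.eq_iff] at hmem
    rcases hmem with (⟨hu, hv⟩ | ⟨hu, hv⟩) | (⟨hu, hv⟩ | ⟨hu, hv⟩) <;>
      subst hu <;> subst hv <;> simp only [level_lvOne, level_lvTop] at hlev <;> omega

lemma rAdj_root_one {γ d : ℕ} (a b j : Fin γ) :
    (rewiredGraph γ d a b).Adj (lvRoot γ d) (lvOne γ d j) := by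
  refine Or.inl (SimpleGraph.deleteEdges_adj.mpr ⟨?_, ?_⟩)
  · rw [layeredGraph, SimpleGraph.fromRel_adj]
    exact ⟨by simp [lvRoot, lvOne], Or.inl (Or.inl rfl)⟩
  · simp [Set.mem_insert_iff, Set.mem_singleton_iff, Sym2.eq_iff, lvRoot, lvOne, lvTop]

lemma rAdj_cross_ba {γ d : ℕ} (a b : Fin γ) :
    (rewiredGraph γ d a b).Adj (lvOne γ d b) (lvTop γ d a) := by
  refine Or.inr ((SimpleGraph.fromEdgeSet_adj _).mpr ⟨?_, by simp [lvOne, lvTop]⟩)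
  simp

lemma rAdj_cross_ab {γ d : ℕ} (a b : Fin γ) :
    (rewiredGraph γ d a b).Adj (lvOne γ d a) (lvTop γ d b) := by
  refine Or.inr ((SimpleGraph.fromEdgeSet_adj _).mpr ⟨?_, by simp [lvOne, lvTop]⟩)
  simp

lemma not_rAdj_root_top {γ d : ℕ} (hd : 1 ≤ d) (a b j : Fin γ) :
    ¬ (rewiredGraph γ d a b).Adj (lvRoot γ d) (lvTop γ d j) := by
  rintro (h | h)
  · have := h.1
    rw [layeredGraph, SimpleGraph.fromRel_adj] at this
    rcases this.2 with h' | h' <;>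
      simp only [level_lvRoot, level_lvTop] at h' <;> omega
  · have := ((SimpleGraph.fromEdgeSet_adj _).mp h).1
    simp only [Set.mem_insert_iff, Set.mem_singleton_iff, Sym2.eq_iff] at this
    rcases this with (⟨h1, _⟩ | ⟨h1, _⟩) | (⟨h1, _⟩ | ⟨h1, _⟩) <;>
      simp [lvRoot, lvOne, lvTop] at h1

lemma rew_dist_top {γ d : ℕ} (hd : 1 ≤ d) (a b j j' : Fin γ)
    (hcross : (rewiredGraph γ d a b).Adj (lvOne γ d j') (lvTop γ d j)) :
    (rewiredGraph γ d a b).dist (lvRoot γ d) (lvTop γ d j) = 2 := by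
  have w : (rewiredGraph γ d a b).Walk (lvRoot γ d) (lvTop γ d j) :=
    SimpleGraph.Walk.cons (rAdj_root_one a b j')
      (SimpleGraph.Walk.cons hcross SimpleGraph.Walk.nil)
  have hle : (rewiredGraph γ d a b).dist (lvRoot γ d) (lvTop γ d j) ≤ 2 := by
    have := SimpleGraph.dist_le (SimpleGraph.Walk.cons (rAdj_root_one a b j')
      (SimpleGraph.Walk.cons hcross SimpleGraph.Walk.nil))
    simpa using this
  have h0 : (rewiredGraph γ d a b).dist (lvRoot γ d) (lvTop γ d j) ≠ 0 := by
    intro h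
    rcases SimpleGraph.dist_eq_zero_iff_eq_or_not_reachable.mp h with h' | h'
    · simp [lvRoot, lvTop] at h'
    · exact h' w.reachable
  have h1 : (rewiredGraph γ d a b).dist (lvRoot γ d) (lvTop γ d j) ≠ 1 := by
    intro h
    exact not_rAdj_root_top hd a b j (SimpleGraph.dist_eq_one_iff_adj.mp h)
  omega


/-- For integers `d ≥ 1`, `γ ≥ 2` and indices `a < b`, the tree
`T = layeredTree γ d` is still a spanning tree of the rewired graph `H'`, the rewired graph
satisfies `dist_{H'}(u⁰, u^{2d+1}_a) = dist_{H'}(u⁰, u^{2d+1}_b) = 2`, while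
`dist_T(u⁰, u^{2d+1}_a) = 2d + 1 > d · dist_{H'}(u⁰, u^{2d+1}_a)`; hence `T` is not a
`d`-approximate BFS tree of `H'`. -/
theorem layeredTree_not_approx_BFS_of_rewired (γ d : ℕ) (hd : 1 ≤ d) (hγ : 2 ≤ γ)
    (a b : Fin γ) (hab : a < b) :
    (layeredTree γ d ≤ rewiredGraph γ d a b ∧ (layeredTree γ d).IsTree) ∧
      ((rewiredGraph γ d a b).dist (lvRoot γ d) (lvTop γ d a) = 2 ∧
        (rewiredGraph γ d a b).dist (lvRoot γ d) (lvTop γ d b) = 2) ∧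
      ((layeredTree γ d).dist (lvRoot γ d) (lvTop γ d a) = 2 * d + 1 ∧
        ((layeredTree γ d).dist (lvRoot γ d) (lvTop γ d a) : ℝ) >
          (d : ℝ) * ((rewiredGraph γ d a b).dist (lvRoot γ d) (lvTop γ d a) : ℝ) ∧
        ¬ (∀ w : LayerVert γ d,
            ((layeredTree γ d).dist (lvRoot γ d) w : ℝ) ≤
              (d : ℝ) * ((rewiredGraph γ d a b).dist (lvRoot γ d) w : ℝ))) := by
  have hγ' : 0 < γ := by omega
  have hda : (rewiredGraph γ d a b).dist (lvRoot γ d) (lvTop γ d a) = 2 :=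
    rew_dist_top hd a b a b (rAdj_cross_ba a b)
  have hdb : (rewiredGraph γ d a b).dist (lvRoot γ d) (lvTop γ d b) = 2 :=
    rew_dist_top hd a b b a (rAdj_cross_ab a b)
  have hta : (layeredTree γ d).dist (lvRoot γ d) (lvTop γ d a) = 2 * d + 1 :=
    tree_dist_top hγ' hd a
  refine ⟨⟨tree_le_rewired hγ' hd a b, ⟨tree_connected hγ' hd, tree_isAcyclic hγ' hd⟩⟩,
    ⟨hda, hdb⟩, hta, ?_, ?_⟩
  · rw [hta, hda]
    push_cast
    have : (1 : ℝ) ≤ (d : ℝ) := by exact_mod_cast hd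
    linarith
  · intro hall
    have := hall (lvTop γ d a)
    rw [hta, hda] at this
    push_cast at this
    have h1 : (1 : ℝ) ≤ (d : ℝ) := by exact_mod_cast hd
    linarith
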